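/- For all 0 ≤ m ≤ n, the Krasnosel'skii–Mann iterates satisfy x_m − x_n = Σ_{j=0}^m Σ_{k=m+1}^n π_j^m π_k^n (T x_{j−1} − T x_{k−1}), where the term T x_{−1} is interpreted as x_0. -/

import Mathlib

lemma km_aux {X : Type*} [AddCommGroup X] [Module ℝ X]
    (α : ℕ → ℝ) (hα0 : α 0 = 1) (y : ℕ → X) (x : ℕ → X)
    (hx0 : x 0 = y 0)
    (hx : ∀ k, x (k + 1) = (1 - α (k + 1)) • x k + α (k + 1) • y (k + 1)) :
    ∀ n, (∑ k ∈ Finset.range (n+1), (α k * ∏ i ∈ Finset.Icc (k+1) n, (1 - α i)) = 1)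
      ∧ x n = ∑ k ∈ Finset.range (n+1),
          (α k * ∏ i ∈ Finset.Icc (k+1) n, (1 - α i)) • y k := by
  intro n
  induction n with
  | zero => simp [hα0, hx0]
  | succ n ih =>
    obtain ⟨ih1, ih2⟩ := ih
    have hstep : ∀ k ∈ Finset.range (n+1),
        (α k * ∏ i ∈ Finset.Icc (k+1) (n+1), (1 - α i))
          = (1 - α (n+1)) * (α k * ∏ i ∈ Finset.Icc (k+1) n, (1 - α i)) := by
      intro k hk
      simp only [Finset.mem_range] at hk
      have h1 : Finset.Icc (k+1) (n+1) = insert (n+1) (Finset.Icc (k+1) n) :=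
        (Finset.insert_Icc_right_eq_Icc_add_one (by omega)).symm
      rw [h1, Finset.prod_insert (by simp)]
      ring
    have hlast : (α (n+1) * ∏ i ∈ Finset.Icc (n+2) (n+1), (1 - α i)) = α (n+1) := by
      simp
    constructor
    · rw [Finset.sum_range_succ, hlast, Finset.sum_congr rfl hstep,
        ← Finset.mul_sum, ih1]
      ring
    · rw [Finset.sum_range_succ, hlast, Finset.sum_congr rfl (fun k hk => by
        rw [hstep k hk, ← smul_smul]), ← Finset.smul_sum, ← ih2, hx]

theorem km_difference_formula
    {X : Type*} [NormedAddCommGroup X] [NormedSpace ℝ X]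
    (C : Set X) (hCne : C.Nonempty) (hCconv : Convex ℝ C)
    (T : X → X) (hTmaps : Set.MapsTo T C C)
    (hT : ∀ x ∈ C, ∀ y ∈ C, ‖T x - T y‖ ≤ ‖x - y‖)
    (α : ℕ → ℝ) (hα0 : α 0 = 1) (hα : ∀ k, α k ∈ Set.Icc (0:ℝ) 1)
    (x : ℕ → X) (hx0 : x 0 ∈ C)
    (hx : ∀ k, x (k + 1) = (1 - α (k + 1)) • x k + α (k + 1) • T (x k))
    (m n : ℕ) (hmn : m ≤ n) :
    x m - x n = ∑ j ∈ Finset.range (m + 1), ∑ k ∈ Finset.Icc (m + 1) n,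
      ((α j * ∏ i ∈ Finset.Icc (j + 1) m, (1 - α i)) *
        (α k * ∏ i ∈ Finset.Icc (k + 1) n, (1 - α i))) •
          ((if j = 0 then x 0 else T (x (j - 1))) - T (x (k - 1))) := by
  set y : ℕ → X := fun j => if j = 0 then x 0 else T (x (j - 1)) with hy
  have key := km_aux α hα0 y x (by simp [hy]) (fun k => by simpa [hy] using hx k)
  set P : ℝ := ∏ i ∈ Finset.Icc (m+1) n, (1 - α i) with hP
  have hsplitπ : ∀ k ∈ Finset.range (m+1),
      (α k * ∏ i ∈ Finset.Icc (k+1) n, (1 - α i))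
        = (α k * ∏ i ∈ Finset.Icc (k+1) m, (1 - α i)) * P := by
    intro k hk
    simp only [Finset.mem_range] at hk
    have h : (∏ i ∈ Finset.Ioc k m, (1 - α i)) * ∏ i ∈ Finset.Ioc m n, (1 - α i)
        = ∏ i ∈ Finset.Ioc k n, (1 - α i) :=
      Finset.prod_Ioc_consecutive _ (by omega) hmn
    simp only [hP, Finset.Icc_add_one_left_eq_Ioc]
    rw [← h]; ring
  have hsplit : ∀ f : ℕ → X, ∑ k ∈ Finset.range (n+1), f k
      = ∑ k ∈ Finset.range (m+1), f k + ∑ k ∈ Finset.Icc (m+1) n, f k := by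
    intro f
    rw [Finset.range_eq_Ico, Finset.range_eq_Ico, ← Finset.Ico_add_one_right_eq_Icc]
    exact (Finset.sum_Ico_consecutive f (m := 0) (n := m + 1) (k := n + 1) (by omega) (by omega)).symm
  have hsplitR : ∀ f : ℕ → ℝ, ∑ k ∈ Finset.range (n+1), f k
      = ∑ k ∈ Finset.range (m+1), f k + ∑ k ∈ Finset.Icc (m+1) n, f k := by
    intro f
    rw [Finset.range_eq_Ico, Finset.range_eq_Ico, ← Finset.Ico_add_one_right_eq_Icc]
    exact (Finset.sum_Ico_consecutive f (m := 0) (n := m + 1) (k := n + 1) (by omega) (by omega)).symm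
  obtain ⟨hs1n, hxn⟩ := key n
  obtain ⟨hs1m, hxm⟩ := key m
  have hxn' : x n = P • x m + ∑ k ∈ Finset.Icc (m+1) n,
      (α k * ∏ i ∈ Finset.Icc (k+1) n, (1 - α i)) • y k := by
    rw [hxn, hsplit, hxm, Finset.smul_sum]
    congr 1
    refine Finset.sum_congr rfl fun k hk => ?_
    rw [hsplitπ k hk, mul_comm, ← smul_smul]
  have hPsum : ∑ k ∈ Finset.Icc (m+1) n,
      (α k * ∏ i ∈ Finset.Icc (k+1) n, (1 - α i)) = 1 - P := by
    have h1 := hs1n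
    rw [hsplitR] at h1
    have h2 : ∑ k ∈ Finset.range (m+1),
        (α k * ∏ i ∈ Finset.Icc (k+1) n, (1 - α i)) = P := by
      rw [Finset.sum_congr rfl hsplitπ, ← Finset.sum_mul, hs1m, one_mul]
    linarith
  have step1 : x m - x n = ∑ k ∈ Finset.Icc (m+1) n,
      (α k * ∏ i ∈ Finset.Icc (k+1) n, (1 - α i)) • (x m - y k) := by
    rw [hxn']
    have h3 : ∑ k ∈ Finset.Icc (m+1) n,
        (α k * ∏ i ∈ Finset.Icc (k+1) n, (1 - α i)) • (x m - y k)
        = (∑ k ∈ Finset.Icc (m+1) n, (α k * ∏ i ∈ Finset.Icc (k+1) n, (1 - α i))) • x m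
          - ∑ k ∈ Finset.Icc (m+1) n, (α k * ∏ i ∈ Finset.Icc (k+1) n, (1 - α i)) • y k := by
      rw [Finset.sum_smul, ← Finset.sum_sub_distrib]
      exact Finset.sum_congr rfl fun k _ => smul_sub _ _ _
    rw [h3, hPsum, sub_smul, one_smul]
    abel
  have step2 : ∀ k, x m - y k = ∑ j ∈ Finset.range (m+1),
      (α j * ∏ i ∈ Finset.Icc (j+1) m, (1 - α i)) • (y j - y k) := by
    intro k
    have h4 : ∑ j ∈ Finset.range (m+1),
        (α j * ∏ i ∈ Finset.Icc (j+1) m, (1 - α i)) • (y j - y k)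
        = ∑ j ∈ Finset.range (m+1), (α j * ∏ i ∈ Finset.Icc (j+1) m, (1 - α i)) • y j
          - (∑ j ∈ Finset.range (m+1), (α j * ∏ i ∈ Finset.Icc (j+1) m, (1 - α i))) • y k := by
      rw [Finset.sum_smul, ← Finset.sum_sub_distrib]
      exact Finset.sum_congr rfl fun j _ => smul_sub _ _ _
    rw [h4, hs1m, one_smul, ← hxm]
  calc x m - x n = ∑ k ∈ Finset.Icc (m+1) n, ∑ j ∈ Finset.range (m+1),
        ((α j * ∏ i ∈ Finset.Icc (j+1) m, (1 - α i)) *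
          (α k * ∏ i ∈ Finset.Icc (k+1) n, (1 - α i))) • (y j - y k) := by
        rw [step1]
        refine Finset.sum_congr rfl fun k _ => ?_
        rw [step2 k, Finset.smul_sum]
        refine Finset.sum_congr rfl fun j _ => ?_
        rw [smul_smul, mul_comm]
    _ = _ := by
        rw [Finset.sum_comm]
        refine Finset.sum_congr rfl fun j _ => Finset.sum_congr rfl fun k hk => ?_
        simp only [Finset.mem_Icc] at hk
        have hk0 : y k = T (x (k-1)) := by
          simp only [hy]
          rw [if_neg (by omega)]
        rw [hk0]
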